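/- Let A_k be any k-atom and let s be a seed of A_k. Then the binomial tree T_k is isomorphic to a subgraph of the path tree T(A_k, s); moreover T_k is isomorphic to the whole path tree T(A_k, s) if and only if A_k is isomorphic to T_k. -/

import Mathlib

/-- `IsKAtomSeed k G s` : the graph `G` is a `k`-atom which admits a recursive
construction starting from the vertex `s` (i.e. `s` is a seed of the atom). -/
inductive IsKAtomSeed : (k : ℕ) → {V : Type} → SimpleGraph V → V → Prop
  | base {V : Type} (G : SimpleGraph V) (s : V) (h2 : Subsingleton V) :
      IsKAtomSeed 1 G s
  | step {V : Type} (G : SimpleGraph V) (k : ℕ) (A : Set V) (s : V) (hs : s ∈ A)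
      (hA : IsKAtomSeed k (G.induce A) ⟨s, hs⟩)
      (hI : ∀ u v : V, u ∉ A → v ∉ A → ¬ G.Adj u v)
      (hone : ∀ a ∈ A, ∃! b : V, b ∉ A ∧ G.Adj a b)
      (hcov : ∀ b : V, b ∉ A → ∃ a ∈ A, G.Adj a b) :
      IsKAtomSeed (k + 1) G s

/-- The binomial tree `T_k` on `2^(k-1)` vertices: `T_1 = K_1`, and `T_{k+1}` is
obtained from `T_k` by attaching one new pendant leaf to every vertex.  Concretely,
vertex `j ≠ 0` is joined to the vertex obtained by clearing the highest set bit
of `j`. -/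
def binomialTree (k : ℕ) : SimpleGraph (Fin (2 ^ (k - 1))) :=
  SimpleGraph.fromRel fun i j =>
    (j : ℕ) ≠ 0 ∧ (i : ℕ) + 2 ^ Nat.log 2 (j : ℕ) = (j : ℕ)

/-- The path tree `T(G, u)`: its vertices are the paths of `G` starting at `u`
(rooted at the length-`0` path), and two paths are adjacent if and only if one is
obtained from the other by adjoining one edge at the end. -/
def pathTree {V : Type} (G : SimpleGraph V) (u : V) :
    SimpleGraph (Σ v : V, G.Path u v) :=
  SimpleGraph.fromRel fun p q =>
    ∃ h : G.Adj p.1 q.1, (q.2 : G.Walk u q.1) = (p.2 : G.Walk u p.1).concat h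


open SimpleGraph Function

namespace AtomAux

variable {V : Type}

/-- The unique neighbor outside `A` of a vertex `a ∈ A`. -/
noncomputable def mate {G : SimpleGraph V} {A : Set V}
    (hone : ∀ a ∈ A, ∃! b : V, b ∉ A ∧ G.Adj a b) (a : A) : V :=
  (hone a a.2).exists.choose

lemma mate_not_mem {G : SimpleGraph V} {A : Set V}
    (hone : ∀ a ∈ A, ∃! b : V, b ∉ A ∧ G.Adj a b) (a : A) : mate hone a ∉ A :=
  (hone a a.2).exists.choose_spec.1

lemma mate_adj {G : SimpleGraph V} {A : Set V}
    (hone : ∀ a ∈ A, ∃! b : V, b ∉ A ∧ G.Adj a b) (a : A) : G.Adj a (mate hone a) :=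
  (hone a a.2).exists.choose_spec.2

lemma mate_unique {G : SimpleGraph V} {A : Set V}
    (hone : ∀ a ∈ A, ∃! b : V, b ∉ A ∧ G.Adj a b) (a : A) {b : V}
    (hb : b ∉ A) (hab : G.Adj a b) : b = mate hone a := by
  obtain ⟨c, _, hu⟩ := hone a a.2
  rw [hu b ⟨hb, hab⟩, hu (mate hone a) ⟨mate_not_mem hone a, mate_adj hone a⟩]

lemma mate_surj {G : SimpleGraph V} {A : Set V}
    (hone : ∀ a ∈ A, ∃! b : V, b ∉ A ∧ G.Adj a b)
    (hcov : ∀ b : V, b ∉ A → ∃ a ∈ A, G.Adj a b) {b : V} (hb : b ∉ A) :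
    ∃ a : A, mate hone a = b := by
  obtain ⟨a, ha, hab⟩ := hcov b hb
  exact ⟨⟨a, ha⟩, (mate_unique hone ⟨a, ha⟩ hb hab).symm⟩

end AtomAux

open AtomAux

lemma card_split {V : Type} (A : Set V) [Finite ↥A] [Finite ↥(Aᶜ)] :
    Nat.card V = Nat.card ↥A + Nat.card ↥(Aᶜ) := by
  rw [← Nat.card_sum]
  exact (Nat.card_congr (by classical exact Equiv.Set.sumCompl A)).symm

lemma atom_one_le {k : ℕ} {V : Type} {G : SimpleGraph V} {s : V}
    (h : IsKAtomSeed k G s) : 1 ≤ k := by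
  induction h with
  | base _ _ _ => exact le_refl 1
  | step G k A s hs hA hI hone hcov ih => omega

lemma atom_finite {k : ℕ} {V : Type} {G : SimpleGraph V} {s : V}
    (h : IsKAtomSeed k G s) : Finite V := by
  induction h with
  | base G s h2 => exact Finite.of_subsingleton
  | step G k A s hs hA hI hone hcov ih =>
    have hAfin : Finite A := ih
    have hcfin : Finite (↥(Aᶜ)) := by
      have : Surjective (fun a : A => (⟨mate hone a, mate_not_mem hone a⟩ : ↥(Aᶜ))) := by
        rintro ⟨b, hb⟩
        obtain ⟨a, ha⟩ := mate_surj hone hcov hb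
        exact ⟨a, by simpa using ha⟩
      exact Finite.of_surjective _ this
    have : Finite (↥A ⊕ ↥(Aᶜ)) := inferInstance
    exact Finite.of_equiv _ (by classical exact Equiv.Set.sumCompl A)

lemma atom_card_le {k : ℕ} {V : Type} {G : SimpleGraph V} {s : V}
    (h : IsKAtomSeed k G s) : Nat.card V ≤ 2 ^ (k - 1) := by
  induction h with
  | base G s h2 =>
    simpa using Nat.card_le_card_of_injective (fun _ => (0 : Fin 1))
      (fun a b _ => Subsingleton.elim a b)
  | step G k A s hs hA hI hone hcov ih =>
    have hk1 : 1 ≤ k := atom_one_le hA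
    have hAfin : Finite A := atom_finite hA
    have hsurj : Surjective (fun a : A => (⟨mate hone a, mate_not_mem hone a⟩ : ↥(Aᶜ))) := by
      rintro ⟨b, hb⟩
      obtain ⟨a, ha⟩ := mate_surj hone hcov hb
      exact ⟨a, by simpa using ha⟩
    have hle : Nat.card (↥(Aᶜ)) ≤ Nat.card A := Nat.card_le_card_of_surjective _ hsurj
    have hcfin : Finite (↥(Aᶜ)) := Finite.of_surjective _ hsurj
    have hVcard := card_split A
    have h2 : 2 ^ (k + 1 - 1) = 2 ^ (k - 1) + 2 ^ (k - 1) := by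
      have hk : k + 1 - 1 = (k - 1) + 1 := by omega
      rw [hk, pow_succ]; omega
    omega

lemma atom_reachable {k : ℕ} {V : Type} {G : SimpleGraph V} {s : V}
    (h : IsKAtomSeed k G s) : ∀ v : V, G.Reachable s v := by
  induction h with
  | base G s h2 => intro v; exact Subsingleton.elim s v ▸ Reachable.refl s
  | step G k A s hs hA hI hone hcov ih =>
    have key : ∀ a : A, G.Reachable s a := by
      intro a
      have := (ih a).map (SimpleGraph.Embedding.induce A).toHom
      simpa using this
    intro v
    by_cases hv : v ∈ A
    · exact key ⟨v, hv⟩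
    · obtain ⟨a, ha, hav⟩ := hcov v hv
      exact (key ⟨a, ha⟩).trans (Adj.reachable hav)


namespace AtomAux

open SimpleGraph Function Walk

variable {V : Type} {G : SimpleGraph V}

/-- The inclusion homomorphism from an induced subgraph. -/
def vHom (G : SimpleGraph V) (A : Set V) : G.induce A →g G :=
  ⟨Subtype.val, fun {a b} h => h⟩

lemma vHom_injective {A : Set V} : Function.Injective (vHom G A) := Subtype.val_injective

lemma support_concat {u v w : V} (p : G.Walk u v) (h : G.Adj v w) :
    (p.concat h).support = p.support ++ [w] := by
  simp [Walk.concat_eq_append, Walk.support_append]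

lemma concat_isPath {u v w : V} {p : G.Walk u v} (hp : p.IsPath) (h : G.Adj v w)
    (hw : w ∉ p.support) : (p.concat h).IsPath := by
  rw [← Walk.isPath_reverse_iff, Walk.reverse_concat]
  apply hp.reverse.cons
  simpa using hw

lemma isPath_of_concat {u v w : V} {p : G.Walk u v} {h : G.Adj v w}
    (hp : (p.concat h).IsPath) : p.IsPath := by
  rw [← Walk.isPath_reverse_iff, Walk.reverse_concat, Walk.cons_isPath_iff] at hp
  exact (Walk.isPath_reverse_iff p).mp hp.1

lemma end_not_mem_of_concat_isPath {u v w : V} {p : G.Walk u v} {h : G.Adj v w}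
    (hp : (p.concat h).IsPath) : w ∉ p.support := by
  rw [← Walk.isPath_reverse_iff, Walk.reverse_concat, Walk.cons_isPath_iff] at hp
  simpa using hp.2

lemma map_concat' {V' : Type} {G' : SimpleGraph V'} (f : G →g G') {u v w : V}
    (p : G.Walk u v) (h : G.Adj v w) :
    (p.concat h).map f = (p.map f).concat (f.map_adj h) := by
  simp [Walk.concat_eq_append, Walk.map_append]

/-- Restrict a walk whose support lies in `A` to the induced subgraph. -/
lemma exists_restrict {A : Set V} : ∀ {u v : V} (p : G.Walk u v)
    (_ : ∀ x ∈ p.support, x ∈ A) (hu : u ∈ A) (hv : v ∈ A),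
    ∃ q : (G.induce A).Walk ⟨u, hu⟩ ⟨v, hv⟩,
      q.map (vHom G A) = p := by
  intro u v p
  induction p with
  | nil => intro _ hu hv; exact ⟨Walk.nil, by simp; rfl⟩
  | cons hadj p ih =>
    rename_i a b c
    intro hsup ha hc
    have hb : b ∈ A := hsup b (by simp)
    obtain ⟨q, hq⟩ := ih (fun x hx => hsup x (by simp [hx])) hb hc
    refine ⟨Walk.cons (by simpa using hadj) q, ?_⟩
    rw [Walk.map_cons, hq]
    rfl

/-- In any graph, if `s` reaches `x` and `x ≠ y`, then there is a path from `s`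
to `x` avoiding `y`, or a path from `s` to `y` avoiding `x`. -/
lemma exists_path_avoid {s x y : V} (hr : G.Reachable s x) (hxy : x ≠ y) :
    (∃ p : G.Walk s x, p.IsPath ∧ y ∉ p.support) ∨
    (∃ p : G.Walk s y, p.IsPath ∧ x ∉ p.support) := by
  classical
  obtain ⟨w⟩ := hr
  set p : G.Walk s x := (w.toPath : G.Walk s x) with hp
  have hpath : p.IsPath := w.toPath.2
  by_cases hy : y ∈ p.support
  · right
    refine ⟨p.takeUntil y hy, hpath.takeUntil hy, ?_⟩
    intro hxq
    have hsplit := p.take_spec hy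
    have hnodup := hpath.support_nodup
    rw [← hsplit, Walk.support_append] at hnodup
    have hdisj := List.disjoint_of_nodup_append hnodup
    have hxd : x ∈ (p.dropUntil y hy).support.tail := by
      have hxe : x ∈ (p.dropUntil y hy).support := Walk.end_mem_support _
      rw [Walk.support_eq_cons] at hxe
      rcases List.mem_cons.mp hxe with h | h
      · exact absurd h hxy
      · exact h
    exact hdisj hxq hxd
  · left; exact ⟨p, hpath, hy⟩

end AtomAux

namespace AtomAux

open SimpleGraph Function

lemma bt_adj_iff {k : ℕ} (i j : Fin (2 ^ (k - 1))) :
    (binomialTree k).Adj i j ↔ (i : ℕ) ≠ (j : ℕ) ∧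
      (((j : ℕ) ≠ 0 ∧ (i : ℕ) + 2 ^ Nat.log 2 (j : ℕ) = (j : ℕ)) ∨
       ((i : ℕ) ≠ 0 ∧ (j : ℕ) + 2 ^ Nat.log 2 (i : ℕ) = (i : ℕ))) := by
  rw [binomialTree, SimpleGraph.fromRel_adj]
  constructor
  · rintro ⟨hne, h⟩; exact ⟨fun hv => hne (Fin.ext hv), h⟩
  · rintro ⟨hne, h⟩; exact ⟨fun hv => hne (congrArg Fin.val hv), h⟩

lemma bt_one_no_adj (i j : Fin (2 ^ (1 - 1))) : ¬ (binomialTree 1).Adj i j := by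
  intro h
  rw [bt_adj_iff] at h
  omega

/-- The splitting equivalence for the binomial tree recursion. -/
def btE (k : ℕ) (hk : 1 ≤ k) : (Fin (2 ^ (k - 1)) ⊕ Fin (2 ^ (k - 1))) ≃ Fin (2 ^ (k + 1 - 1)) :=
  finSumFinEquiv.trans (finCongr (by
    have h1 : k - 1 + 1 = k := by omega
    calc 2 ^ (k-1) + 2 ^ (k-1) = 2 ^ ((k-1)+1) := by rw [pow_succ]; omega
      _ = 2 ^ k := by rw [h1]
      _ = 2 ^ (k + 1 - 1) := by rw [Nat.add_sub_cancel]))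

@[simp] lemma btE_inl (k : ℕ) (hk : 1 ≤ k) (i : Fin (2 ^ (k - 1))) :
    ((btE k hk (Sum.inl i)) : ℕ) = (i : ℕ) := by
  simp [btE]

@[simp] lemma btE_inr (k : ℕ) (hk : 1 ≤ k) (i : Fin (2 ^ (k - 1))) :
    ((btE k hk (Sum.inr i)) : ℕ) = 2 ^ (k - 1) + (i : ℕ) := by
  simp [btE]; omega

lemma log_half {k n : ℕ} (hk : 1 ≤ k) (h1 : 2 ^ (k - 1) ≤ n) (h2 : n < 2 ^ k) :
    Nat.log 2 n = k - 1 := by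
  apply Nat.log_eq_of_pow_le_of_lt_pow h1
  have : k - 1 + 1 = k := by omega
  rwa [this]

lemma pow_lt_pow_of_lt : ∀ {a b : ℕ}, a < b → (2:ℕ) ^ a < 2 ^ b :=
  fun h => Nat.pow_lt_pow_right (by norm_num) h

lemma btE_adj_inl_inl {k : ℕ} (hk : 1 ≤ k) (i j : Fin (2 ^ (k - 1))) :
    (binomialTree (k + 1)).Adj (btE k hk (Sum.inl i)) (btE k hk (Sum.inl j)) ↔
      (binomialTree k).Adj i j := by
  rw [bt_adj_iff, bt_adj_iff, btE_inl, btE_inl]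

lemma btE_adj_inl_inr {k : ℕ} (hk : 1 ≤ k) (i j : Fin (2 ^ (k - 1))) :
    (binomialTree (k + 1)).Adj (btE k hk (Sum.inl i)) (btE k hk (Sum.inr j)) ↔ i = j := by
  have hi : (i : ℕ) < 2 ^ (k - 1) := i.2
  have hj : (j : ℕ) < 2 ^ (k - 1) := j.2
  have hpos : 0 < 2 ^ (k - 1) := Nat.pow_pos (by norm_num)
  have h2k : 2 ^ (k - 1) + 2 ^ (k - 1) = 2 ^ k := by
    have h1 : k - 1 + 1 = k := by omega
    have h2 := pow_succ 2 (k - 1)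
    rw [h1] at h2; omega
  have hlog : Nat.log 2 (2 ^ (k - 1) + (j : ℕ)) = k - 1 :=
    log_half (k := k) hk (by omega) (by omega)
  rw [bt_adj_iff, btE_inl, btE_inr, hlog]
  constructor
  · rintro ⟨hne, ⟨h0, heq⟩ | ⟨h0, heq⟩⟩
    · exact Fin.ext (by omega)
    · exact absurd heq (ne_of_gt (lt_of_lt_of_le hi
        ((Nat.le_add_right _ _).trans (Nat.le_add_right _ _))))
  · rintro rfl
    exact ⟨by omega, Or.inl ⟨by omega, by omega⟩⟩

lemma btE_adj_inr_inr {k : ℕ} (hk : 1 ≤ k) (i j : Fin (2 ^ (k - 1))) :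
    ¬ (binomialTree (k + 1)).Adj (btE k hk (Sum.inr i)) (btE k hk (Sum.inr j)) := by
  have hi : (i : ℕ) < 2 ^ (k - 1) := i.2
  have hj : (j : ℕ) < 2 ^ (k - 1) := j.2
  have hpos : 0 < 2 ^ (k - 1) := Nat.pow_pos (by norm_num)
  have h2k : 2 ^ (k - 1) + 2 ^ (k - 1) = 2 ^ k := by
    have h1 : k - 1 + 1 = k := by omega
    have h2 := pow_succ 2 (k - 1)
    rw [h1] at h2; omega
  have hlogi : Nat.log 2 (2 ^ (k - 1) + (i : ℕ)) = k - 1 :=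
    log_half (k := k) hk (by omega) (by omega)
  have hlogj : Nat.log 2 (2 ^ (k - 1) + (j : ℕ)) = k - 1 :=
    log_half (k := k) hk (by omega) (by omega)
  rw [bt_adj_iff, btE_inr, btE_inr, hlogi, hlogj]
  rintro ⟨hne, ⟨h0, heq⟩ | ⟨h0, heq⟩⟩ <;> omega

end AtomAux

namespace AtomAux

open SimpleGraph Function

lemma atom_tree_iso {k : ℕ} {V : Type} {G : SimpleGraph V} {s : V}
    (h : IsKAtomSeed k G s) : Nat.card V = 2 ^ (k - 1) → Nonempty (G ≃g binomialTree k) := by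
  induction h with
  | base G s h2 =>
    intro _
    haveI : Unique _ := uniqueOfSubsingleton s
    haveI : Unique (Fin (2 ^ (1 - 1))) := by
      refine ⟨⟨⟨0, by norm_num⟩⟩, ?_⟩
      intro a; exact Fin.ext (by omega)
    refine ⟨⟨Equiv.ofUnique _ _, ?_⟩⟩
    intro u v
    constructor
    · intro hadj; exact absurd hadj (bt_one_no_adj _ _)
    · intro hadj
      exact absurd (Subsingleton.elim u v ▸ hadj) G.irrefl
  | step G k A s hs hA hI hone hcov ih =>
    intro hcard
    classical
    have hk1 : 1 ≤ k := atom_one_le hA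
    haveI hAfin : Finite ↥A := atom_finite hA
    have hsurj : Surjective (fun a : ↥A => (⟨mate hone a, mate_not_mem hone a⟩ : ↥(Aᶜ))) := by
      rintro ⟨b, hb⟩
      obtain ⟨a, ha⟩ := mate_surj hone hcov hb
      exact ⟨a, by simpa using ha⟩
    haveI hcfin : Finite ↥(Aᶜ) := Finite.of_surjective _ hsurj
    have hVcard := card_split A
    have hle : Nat.card ↥(Aᶜ) ≤ Nat.card ↥A := Nat.card_le_card_of_surjective _ hsurj
    have hAle := atom_card_le hA
    have h2 : 2 ^ (k + 1 - 1) = 2 ^ (k - 1) + 2 ^ (k - 1) := by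
      have h1 : k - 1 + 1 = k := by omega
      have h2' := pow_succ 2 (k - 1)
      rw [h1] at h2'
      rw [Nat.add_sub_cancel]; omega
    have hcardA : Nat.card ↥A = 2 ^ (k - 1) := by omega
    have hcardC : Nat.card ↥(Aᶜ) = 2 ^ (k - 1) := by omega
    obtain ⟨e⟩ := ih hcardA
    have hbij : Bijective (fun a : ↥A => (⟨mate hone a, mate_not_mem hone a⟩ : ↥(Aᶜ))) :=
      (Nat.bijective_iff_surjective_and_card _).mpr ⟨hsurj, hcardA.trans hcardC.symm⟩
    set m : ↥A ≃ ↥(Aᶜ) := Equiv.ofBijective _ hbij with hm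
    have hmate_app : ∀ a : ↥A, (m a).1 = mate hone a := fun a => rfl
    set φ :=
      ((Equiv.Set.sumCompl A).symm.trans
        (Equiv.sumCongr e.toEquiv (m.symm.trans e.toEquiv))).trans (btE k hk1) with hφ
    have hφA : ∀ a (ha : a ∈ A), φ a = btE k hk1 (Sum.inl (e ⟨a, ha⟩)) := by
      intro a ha
      simp [hφ, Equiv.Set.sumCompl_symm_apply_of_mem ha]
    have hφC : ∀ b (hb : b ∉ A), φ b = btE k hk1 (Sum.inr (e (m.symm ⟨b, hb⟩))) := by
      intro b hb
      simp [hφ, Equiv.Set.sumCompl_symm_apply_of_notMem hb]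
    -- the key adjacency transfer for the mixed case
    have hmixed : ∀ a (ha : a ∈ A) b (hb : b ∉ A),
        ((binomialTree (k + 1)).Adj (φ a) (φ b) ↔ G.Adj a b) := by
      intro a ha b hb
      rw [hφA a ha, hφC b hb, btE_adj_inl_inr]
      constructor
      · intro heq
        have h3 : (⟨a, ha⟩ : ↥A) = m.symm ⟨b, hb⟩ := e.injective heq
        have h4 : m ⟨a, ha⟩ = ⟨b, hb⟩ := by rw [h3]; simp
        have hb' : mate hone ⟨a, ha⟩ = b := by rw [← hmate_app, h4]
        rw [← hb']
        exact mate_adj hone ⟨a, ha⟩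
      · intro hadj
        have h5 : mate hone ⟨a, ha⟩ = b := (mate_unique hone ⟨a, ha⟩ hb hadj).symm
        have h3 : m ⟨a, ha⟩ = ⟨b, hb⟩ := Subtype.ext (by rw [hmate_app]; exact h5)
        rw [← h3]
        simp
    refine ⟨⟨φ, ?_⟩⟩
    intro u v
    by_cases hu : u ∈ A <;> by_cases hv : v ∈ A
    · rw [hφA u hu, hφA v hv, btE_adj_inl_inl, e.map_rel_iff]
      exact Iff.rfl
    · exact hmixed u hu v hv
    · rw [(binomialTree (k+1)).adj_comm, G.adj_comm]
      exact hmixed v hv u hu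
    · rw [hφC u hu, hφC v hv]
      constructor
      · intro hadj; exact absurd hadj (btE_adj_inr_inr hk1 _ _)
      · intro hadj; exact absurd hadj (hI u v hu hv)

end AtomAux

namespace AtomAux

open SimpleGraph Function

variable {V : Type} {G : SimpleGraph V} {A : Set V} {s : V}

/-- Lift a path of the induced subgraph on `A` to a path of `G`. -/
def liftP (hs : s ∈ A) (P : Σ v : ↥A, (G.induce A).Path ⟨s, hs⟩ v) :
    Σ v : V, G.Path s v :=
  ⟨(P.1 : V), ⟨(P.2 : (G.induce A).Walk ⟨s, hs⟩ P.1).map (vHom G A),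
    Walk.map_isPath_of_injective vHom_injective P.2.2⟩⟩

lemma liftP_fst (hs : s ∈ A) (P : Σ v : ↥A, (G.induce A).Path ⟨s, hs⟩ v) :
    (liftP hs P).1 = (P.1 : V) := rfl

lemma liftP_fst_mem (hs : s ∈ A) (P : Σ v : ↥A, (G.induce A).Path ⟨s, hs⟩ v) :
    (liftP hs P).1 ∈ A := P.1.2

lemma liftP_support (hs : s ∈ A) (P : Σ v : ↥A, (G.induce A).Path ⟨s, hs⟩ v) :
    ∀ x ∈ ((liftP hs P).2 : G.Walk s (liftP hs P).1).support, x ∈ A := by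
  intro x hx
  change x ∈ ((P.2 : (G.induce A).Walk ⟨s, hs⟩ P.1).map (vHom G A)).support at hx
  simp only [Walk.support_map, List.mem_map] at hx
  obtain ⟨y, _, rfl⟩ := hx
  exact y.2

lemma sigma_path_ext {P Q : Σ v : V, G.Path s v} (h1 : P.1 = Q.1)
    (h2 : (P.2 : G.Walk s P.1).copy rfl h1 = (Q.2 : G.Walk s Q.1)) : P = Q := by
  obtain ⟨v, p, hp⟩ := P
  obtain ⟨w, q, hq⟩ := Q
  cases h1
  simp only [Walk.copy_rfl_rfl] at h2
  cases h2
  rfl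

lemma eq_iff_exists_copy {P Q : Σ v : V, G.Path s v} :
    P = Q ↔ ∃ h1 : P.1 = Q.1, ((P.2 : G.Walk s P.1).copy rfl h1) = (Q.2 : G.Walk s Q.1) := by
  constructor
  · rintro rfl; exact ⟨rfl, by simp⟩
  · rintro ⟨h1, h2⟩; exact sigma_path_ext h1 h2

lemma copy_concat {u v w w' : V} (p : G.Walk u v) (h : G.Adj v w) (hw : w = w') :
    (p.concat h).copy rfl hw = p.concat (hw ▸ h) := by subst hw; simp

lemma liftP_injective (hs : s ∈ A) : Injective (liftP (G := G) hs) := by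
  rintro ⟨v, p, hp⟩ ⟨w, q, hq⟩ h
  obtain ⟨h1, h2⟩ := eq_iff_exists_copy.mp h
  simp only [liftP] at h1 h2
  have h1' : v = w := Subtype.ext h1
  cases h1'
  have h2 : p.map (vHom G A) = q.map (vHom G A) := h2
  have h3 := Walk.map_injective_of_injective (vHom_injective (G := G) (A := A)) ⟨s, hs⟩ v h2
  cases h3
  rfl

/-- Extend a lifted path by the mate of its endpoint. -/
noncomputable def extP (hs : s ∈ A) (hone : ∀ a ∈ A, ∃! b : V, b ∉ A ∧ G.Adj a b)
    (P : Σ v : ↥A, (G.induce A).Path ⟨s, hs⟩ v) : Σ v : V, G.Path s v :=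
  ⟨mate hone P.1,
    ⟨((liftP hs P).2 : G.Walk s (liftP hs P).1).concat (mate_adj hone P.1),
      concat_isPath (liftP hs P).2.2 (mate_adj hone P.1)
        (fun hmem => mate_not_mem hone P.1 (liftP_support hs P _ hmem))⟩⟩

lemma extP_fst_not_mem (hs : s ∈ A) (hone : ∀ a ∈ A, ∃! b : V, b ∉ A ∧ G.Adj a b)
    (P : Σ v : ↥A, (G.induce A).Path ⟨s, hs⟩ v) : (extP hs hone P).1 ∉ A :=
  mate_not_mem hone P.1

lemma extP_injective (hs : s ∈ A) (hone : ∀ a ∈ A, ∃! b : V, b ∉ A ∧ G.Adj a b) :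
    Injective (extP (G := G) hs hone) := by
  intro P Q h
  obtain ⟨h1, h2⟩ := eq_iff_exists_copy.mp h
  simp only [extP] at h1 h2
  have h2 := (copy_concat ((liftP hs P).2 : G.Walk s (liftP hs P).1) (mate_adj hone P.1) h1).symm.trans h2
  obtain ⟨hv, hcopy⟩ := Walk.concat_inj h2
  exact liftP_injective hs (sigma_path_ext hv hcopy)

end AtomAux

namespace AtomAux

open SimpleGraph Function

variable {V : Type} {G : SimpleGraph V} {A : Set V} {s : V}

lemma pt_adj_iff (P Q : Σ v : V, G.Path s v) :
    (pathTree G s).Adj P Q ↔ P ≠ Q ∧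
      ((∃ h : G.Adj P.1 Q.1, (Q.2 : G.Walk s Q.1) = (P.2 : G.Walk s P.1).concat h) ∨
       (∃ h : G.Adj Q.1 P.1, (P.2 : G.Walk s P.1) = (Q.2 : G.Walk s Q.1).concat h)) := by
  rw [pathTree, SimpleGraph.fromRel_adj]

lemma liftP_adj (hs : s ∈ A) (P Q : Σ v : ↥A, (G.induce A).Path ⟨s, hs⟩ v) :
    (pathTree G s).Adj (liftP hs P) (liftP hs Q) ↔
      (pathTree (G.induce A) ⟨s, hs⟩).Adj P Q := by
  rw [pt_adj_iff, pt_adj_iff]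
  have hrel : ∀ P Q : Σ v : ↥A, (G.induce A).Path ⟨s, hs⟩ v,
      (∃ h : G.Adj (liftP hs P).1 (liftP hs Q).1,
        ((liftP hs Q).2 : G.Walk s (liftP hs Q).1) =
          ((liftP hs P).2 : G.Walk s (liftP hs P).1).concat h) ↔
      (∃ h : (G.induce A).Adj P.1 Q.1,
        (Q.2 : (G.induce A).Walk ⟨s, hs⟩ Q.1) =
          (P.2 : (G.induce A).Walk ⟨s, hs⟩ P.1).concat h) := by
    intro P Q
    constructor
    · rintro ⟨h, heq⟩
      have hA : (G.induce A).Adj P.1 Q.1 := h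
      refine ⟨hA, ?_⟩
      have h2 : (Q.2 : (G.induce A).Walk ⟨s, hs⟩ Q.1).map (vHom G A) =
          ((P.2 : (G.induce A).Walk ⟨s, hs⟩ P.1).concat hA).map (vHom G A) := by
        rw [map_concat']
        exact heq
      exact Walk.map_injective_of_injective (vHom_injective (G := G) (A := A)) _ _ h2
    · rintro ⟨h, heq⟩
      refine ⟨h, ?_⟩
      show (Q.2 : (G.induce A).Walk ⟨s, hs⟩ Q.1).map (vHom G A) = _
      rw [heq, map_concat']
      rfl
  rw [hrel P Q, hrel Q P, (liftP_injective hs).ne_iff]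

lemma liftP_extP_adj (hs : s ∈ A) (hone : ∀ a ∈ A, ∃! b : V, b ∉ A ∧ G.Adj a b)
    (P Q : Σ v : ↥A, (G.induce A).Path ⟨s, hs⟩ v) :
    (pathTree G s).Adj (liftP hs P) (extP hs hone Q) ↔ P = Q := by
  constructor
  · intro h
    rw [pt_adj_iff] at h
    obtain ⟨hne, ⟨h, heq⟩ | ⟨h, heq⟩⟩ := h
    · -- extP Q = (liftP P).concat h
      have heq' : ((liftP hs Q).2 : G.Walk s (liftP hs Q).1).concat (mate_adj hone Q.1) =
          ((liftP hs P).2 : G.Walk s (liftP hs P).1).concat h := heq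
      obtain ⟨hv, hcopy⟩ := Walk.concat_inj heq'
      exact (liftP_injective hs (sigma_path_ext hv hcopy)).symm
    · -- liftP P = (extP Q).concat h : impossible, mate Q.1 ∈ support of liftP P
      exfalso
      have hmem : mate hone Q.1 ∈ ((liftP hs P).2 : G.Walk s (liftP hs P).1).support := by
        have h3 : ((liftP hs P).2 : G.Walk s (liftP hs P).1) =
            ((extP hs hone Q).2 : G.Walk s (extP hs hone Q).1).concat h := heq
        rw [h3, support_concat]
        refine List.mem_append.mpr (Or.inl ?_)
        exact Walk.end_mem_support _
      exact mate_not_mem hone Q.1 (liftP_support hs P _ hmem)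
  · rintro rfl
    rw [pt_adj_iff]
    refine ⟨?_, Or.inl ⟨mate_adj hone P.1, rfl⟩⟩
    intro hPQ
    have h6 : (liftP hs P).1 = (extP hs hone P).1 := congrArg Sigma.fst hPQ
    have h7 : (P.1 : V) = mate hone P.1 := h6
    exact mate_not_mem hone P.1 (by rw [← h7]; exact P.1.2)

lemma extP_extP_not_adj (hs : s ∈ A) (hone : ∀ a ∈ A, ∃! b : V, b ∉ A ∧ G.Adj a b)
    (hI : ∀ u v : V, u ∉ A → v ∉ A → ¬ G.Adj u v)
    (P Q : Σ v : ↥A, (G.induce A).Path ⟨s, hs⟩ v) :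
    ¬ (pathTree G s).Adj (extP hs hone P) (extP hs hone Q) := by
  intro h
  rw [pt_adj_iff] at h
  obtain ⟨hne, ⟨h, _⟩ | ⟨h, _⟩⟩ := h
  · exact hI _ _ (mate_not_mem hone P.1) (mate_not_mem hone Q.1) h
  · exact hI _ _ (mate_not_mem hone Q.1) (mate_not_mem hone P.1) h

/-- Classification of paths from the seed in an atom whose outside vertices
have a unique neighbor in `A`. -/
lemma path_classify (hI : ∀ u v : V, u ∉ A → v ∉ A → ¬ G.Adj u v)
    (hmatch : ∀ b ∉ A, ∀ a₁ a₂, a₁ ∈ A → a₂ ∈ A → G.Adj a₁ b → G.Adj a₂ b → a₁ = a₂)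
    {u v : V} (p : G.Walk u v) : u ∈ A → p.IsPath →
    (∀ x ∈ p.support, x ∈ A) ∨
    (v ∉ A ∧ ∃ (w : V) (q : G.Walk u w) (hq : G.Adj w v),
      (∀ x ∈ q.support, x ∈ A) ∧ p = q.concat hq) := by
  induction p using SimpleGraph.Walk.concatRec with
  | @Hnil u' =>
    intro hu _
    left
    intro x hx
    have hxu : x = u' := by simpa using hx
    rw [hxu]; exact hu
  | @Hconcat u' v' w p h ih =>
    intro hu hp
    have hp' : p.IsPath := isPath_of_concat hp
    have hw : w ∉ p.support := end_not_mem_of_concat_isPath hp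
    rcases ih hu hp' with hall | ⟨hu', w', q, hq, hqA, rfl⟩
    · by_cases hvA : w ∈ A
      · left
        intro x hx
        rw [support_concat] at hx
        rcases List.mem_append.mp hx with hx | hx
        · exact hall x hx
        · have hxw : x = w := by simpa using hx
          rw [hxw]; exact hvA
      · right
        exact ⟨hvA, v', p, h, hall, rfl⟩
    · exfalso
      by_cases hvA : w ∈ A
      · have hw'A : w' ∈ A := hqA w' (Walk.end_mem_support q)
        have hww : w' = w := hmatch v' hu' w' w hw'A hvA hq h.symm
        apply hw
        rw [← hww, support_concat]
        exact List.mem_append.mpr (Or.inl (Walk.end_mem_support q))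
      · exact hI v' w hu' hvA h

end AtomAux

namespace AtomAux

open SimpleGraph Function

theorem atom_master {k : ℕ} {V : Type} {G : SimpleGraph V} {s : V} (h : IsKAtomSeed k G s) :
    ∃ f : Fin (2 ^ (k - 1)) → Σ v : V, G.Path s v,
      Injective f ∧
      (∀ a b, (binomialTree k).Adj a b ↔ (pathTree G s).Adj (f a) (f b)) ∧
      (Surjective f ↔ Nat.card V = 2 ^ (k - 1)) := by
  induction h with
  | base G s h2 =>
    classical
    refine ⟨fun _ => ⟨s, (Walk.nil : G.Walk s s).toPath⟩, ?_, ?_, ?_⟩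
    · intro a b _
      apply Fin.ext
      have ha := a.isLt; have hb := b.isLt
      norm_num at ha hb; omega
    · intro a b
      constructor
      · intro hadj; exact absurd hadj (bt_one_no_adj a b)
      · intro hadj; exact absurd rfl ((pathTree G s).ne_of_adj hadj)
    · constructor
      · intro _
        haveI := uniqueOfSubsingleton s
        rw [Nat.card_unique]; norm_num
      · intro _
        rintro ⟨v, p, hp⟩
        cases p with
        | nil => exact ⟨⟨0, by norm_num⟩, rfl⟩
        | @cons _ m _ hadj q =>
          have hsm : s = m := Subsingleton.elim s m
          exact absurd hadj (hsm ▸ G.irrefl)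
  | step G k A s hs hA hI hone hcov ih =>
    classical
    have hk1 : 1 ≤ k := atom_one_le hA
    haveI hAfin : Finite ↥A := atom_finite hA
    obtain ⟨f₀, hinj₀, hadj₀, hsurj₀⟩ := ih
    set F : (Fin (2 ^ (k - 1)) ⊕ Fin (2 ^ (k - 1))) → Σ v, G.Path s v :=
      Sum.elim (fun i => liftP hs (f₀ i)) (fun i => extP hs hone (f₀ i)) with hF
    have hFinj : Injective F := by
      rintro (i | i) (j | j) hij <;> simp only [hF, Sum.elim_inl, Sum.elim_inr] at hij
      · exact congrArg Sum.inl (hinj₀ (liftP_injective hs hij))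
      · exfalso
        have h5 := congrArg Sigma.fst hij
        exact extP_fst_not_mem hs hone (f₀ j) (h5 ▸ liftP_fst_mem hs (f₀ i))
      · exfalso
        have h5 := congrArg Sigma.fst hij
        exact extP_fst_not_mem hs hone (f₀ i) (h5.symm ▸ liftP_fst_mem hs (f₀ j))
      · exact congrArg Sum.inr (hinj₀ (extP_injective hs hone hij))
    have h2 : 2 ^ (k + 1 - 1) = 2 ^ (k - 1) + 2 ^ (k - 1) := by
      have h1 : k - 1 + 1 = k := by omega
      have h2' := pow_succ 2 (k - 1)
      rw [h1] at h2'
      rw [Nat.add_sub_cancel]; omega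
    have hsurjm : Surjective (fun a : ↥A => (⟨mate hone a, mate_not_mem hone a⟩ : ↥(Aᶜ))) := by
      rintro ⟨b, hb⟩
      obtain ⟨a, ha⟩ := mate_surj hone hcov hb
      exact ⟨a, by simpa using ha⟩
    haveI hcfin : Finite ↥(Aᶜ) := Finite.of_surjective _ hsurjm
    have hVcard := card_split A
    refine ⟨F ∘ (btE k hk1).symm, hFinj.comp (btE k hk1).symm.injective, ?_, ?_⟩
    · intro a b
      rw [← (btE k hk1).apply_symm_apply a, ← (btE k hk1).apply_symm_apply b]
      show _ ↔ (pathTree G s).Adj (F ((btE k hk1).symm ((btE k hk1) _)))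
        (F ((btE k hk1).symm ((btE k hk1) _)))
      rw [Equiv.symm_apply_apply, Equiv.symm_apply_apply]
      rcases (btE k hk1).symm a with i | i <;> rcases (btE k hk1).symm b with j | j
      · rw [btE_adj_inl_inl hk1, hadj₀]
        exact (liftP_adj hs _ _).symm
      · rw [btE_adj_inl_inr hk1]
        show _ ↔ (pathTree G s).Adj (liftP hs (f₀ i)) (extP hs hone (f₀ j))
        rw [liftP_extP_adj hs hone]
        exact ⟨fun hh => hh ▸ rfl, fun hh => hinj₀ hh⟩
      · rw [(binomialTree (k + 1)).adj_comm, (pathTree G s).adj_comm, btE_adj_inl_inr hk1]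
        show _ ↔ (pathTree G s).Adj (liftP hs (f₀ j)) (extP hs hone (f₀ i))
        rw [liftP_extP_adj hs hone]
        exact ⟨fun hh => hh ▸ rfl, fun hh => hinj₀ hh⟩
      · constructor
        · intro hadj; exact absurd hadj (btE_adj_inr_inr hk1 i j)
        · intro hadj; exact absurd hadj (extP_extP_not_adj hs hone hI (f₀ i) (f₀ j))
    · constructor
      · -- surjective → card
        intro hsurj
        have hFsurj : Surjective F := by
          intro S
          obtain ⟨a, haa⟩ := hsurj S
          exact ⟨(btE k hk1).symm a, haa⟩
        have hf₀surj : Surjective f₀ := by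
          intro P
          obtain ⟨x, hx⟩ := hFsurj (liftP hs P)
          rcases x with i | i <;> simp only [hF, Sum.elim_inl, Sum.elim_inr] at hx
          · exact ⟨i, liftP_injective hs hx⟩
          · exfalso
            have h5 := congrArg Sigma.fst hx
            exact extP_fst_not_mem hs hone (f₀ i) (by rw [h5]; exact liftP_fst_mem hs P)
        have hcardA : Nat.card ↥A = 2 ^ (k - 1) := hsurj₀.mp hf₀surj
        have hform : ∀ S : Σ v, G.Path s v,
            (∀ x ∈ (S.2 : G.Walk s S.1).support, x ∈ A) ∨ S.1 ∉ A := by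
          intro S
          obtain ⟨x, hx⟩ := hFsurj S
          rcases x with i | i <;> simp only [hF, Sum.elim_inl, Sum.elim_inr] at hx
          · left; rw [← hx]; exact liftP_support hs (f₀ i)
          · right; rw [← hx]; exact extP_fst_not_mem hs hone (f₀ i)
        have hmatch : ∀ b, b ∉ A → ∀ a₁ a₂, a₁ ∈ A → a₂ ∈ A →
            G.Adj a₁ b → G.Adj a₂ b → a₁ = a₂ := by
          intro b hb a₁ a₂ ha₁ ha₂ hb1 hb2
          by_contra hne
          have hbad : ∀ x₁ x₂ (hx₁ : x₁ ∈ A) (hx₂ : x₂ ∈ A), G.Adj x₁ b → G.Adj x₂ b →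
              x₁ ≠ x₂ →
              ∀ q : (G.induce A).Walk ⟨s, hs⟩ ⟨x₁, hx₁⟩, q.IsPath →
                (⟨x₂, hx₂⟩ : ↥A) ∉ q.support → False := by
            intro x₁ x₂ hx₁ hx₂ hxb1 hxb2 hxne q hqp havoid
            set w : G.Walk s x₁ := q.map (vHom G A) with hww
            have hwp : w.IsPath := Walk.map_isPath_of_injective vHom_injective hqp
            have hwA : ∀ x ∈ w.support, x ∈ A := by
              intro x hxw
              change x ∈ (q.map (vHom G A)).support at hxw
              rw [Walk.support_map] at hxw
              obtain ⟨y, _, rfl⟩ := List.mem_map.mp hxw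
              exact y.2
            have hbw : b ∉ w.support := fun hmem => hb (hwA b hmem)
            set w1 : G.Walk s b := w.concat hxb1 with hw1
            have hw1p : w1.IsPath := concat_isPath hwp hxb1 hbw
            have hx2w1 : x₂ ∉ w1.support := by
              rw [hw1, support_concat]
              intro hmem
              rcases List.mem_append.mp hmem with hmem | hmem
              · apply havoid
                change x₂ ∈ (q.map (vHom G A)).support at hmem
                rw [Walk.support_map] at hmem
                obtain ⟨y, hy, hyx⟩ := List.mem_map.mp hmem
                have : y = ⟨x₂, hx₂⟩ := Subtype.ext hyx
                rw [← this]; exact hy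
              · have : x₂ = b := by simpa using hmem
                exact hb (this ▸ hx₂)
            set w2 : G.Walk s x₂ := w1.concat hxb2.symm with hw2
            have hw2p : w2.IsPath := concat_isPath hw1p hxb2.symm hx2w1
            rcases hform ⟨x₂, ⟨w2, hw2p⟩⟩ with hall | hnot
            · apply hb
              apply hall
              show b ∈ w2.support
              rw [hw2, support_concat]
              exact List.mem_append.mpr (Or.inl (Walk.end_mem_support w1))
            · exact hnot hx₂
          have hreach := atom_reachable hA ⟨a₁, ha₁⟩
          have hne' : (⟨a₁, ha₁⟩ : ↥A) ≠ ⟨a₂, ha₂⟩ := fun hh => hne (congrArg Subtype.val hh)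
          rcases exists_path_avoid hreach hne' with ⟨q, hqp, havoid⟩ | ⟨q, hqp, havoid⟩
          · exact hbad a₁ a₂ ha₁ ha₂ hb1 hb2 hne q hqp havoid
          · exact hbad a₂ a₁ ha₂ ha₁ hb2 hb1 (Ne.symm hne) q hqp havoid
        have hmateinj : Injective (fun a : ↥A => (⟨mate hone a, mate_not_mem hone a⟩ : ↥(Aᶜ))) := by
          intro a₁ a₂ hm
          have hm' : mate hone a₁ = mate hone a₂ := congrArg Subtype.val hm
          apply Subtype.ext
          exact hmatch (mate hone a₁) (mate_not_mem hone a₁) a₁ a₂ a₁.2 a₂.2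
            (mate_adj hone a₁) (by rw [hm']; exact mate_adj hone a₂)
        have hcardC : Nat.card ↥(Aᶜ) = 2 ^ (k - 1) :=
          (Nat.card_congr (Equiv.ofBijective _ ⟨hmateinj, hsurjm⟩)).symm.trans hcardA
        omega
      · -- card → surjective
        intro hcard
        have hle : Nat.card ↥(Aᶜ) ≤ Nat.card ↥A := Nat.card_le_card_of_surjective _ hsurjm
        have hAle := atom_card_le hA
        have hcardA : Nat.card ↥A = 2 ^ (k - 1) := by omega
        have hcardC : Nat.card ↥(Aᶜ) = 2 ^ (k - 1) := by omega
        have hf₀surj : Surjective f₀ := hsurj₀.mpr hcardA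
        have hbijm : Bijective (fun a : ↥A => (⟨mate hone a, mate_not_mem hone a⟩ : ↥(Aᶜ))) :=
          (Nat.bijective_iff_surjective_and_card _).mpr ⟨hsurjm, hcardA.trans hcardC.symm⟩
        have hmatch : ∀ b, b ∉ A → ∀ a₁ a₂, a₁ ∈ A → a₂ ∈ A →
            G.Adj a₁ b → G.Adj a₂ b → a₁ = a₂ := by
          intro b hb a₁ a₂ ha₁ ha₂ hb1 hb2
          have e1 : mate hone ⟨a₁, ha₁⟩ = b := (mate_unique hone ⟨a₁, ha₁⟩ hb hb1).symm
          have e2 : mate hone ⟨a₂, ha₂⟩ = b := (mate_unique hone ⟨a₂, ha₂⟩ hb hb2).symm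
          have : (⟨a₁, ha₁⟩ : ↥A) = ⟨a₂, ha₂⟩ :=
            hbijm.1 (Subtype.ext (e1.trans e2.symm))
          exact congrArg Subtype.val this
        rintro ⟨v, p, hp⟩
        rcases path_classify hI hmatch p hs hp with hall | ⟨hv, w, q, hq, hqA, rfl⟩
        · have hv : v ∈ A := hall v (Walk.end_mem_support p)
          obtain ⟨q₀, hq₀⟩ := exists_restrict p hall hs hv
          have hq₀path : q₀.IsPath := by
            rw [← hq₀] at hp
            exact hp.of_map
          obtain ⟨i, hi⟩ := hf₀surj ⟨⟨v, hv⟩, ⟨q₀, hq₀path⟩⟩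
          refine ⟨btE k hk1 (Sum.inl i), ?_⟩
          show F ((btE k hk1).symm ((btE k hk1) (Sum.inl i))) = _
          rw [Equiv.symm_apply_apply]
          show liftP hs (f₀ i) = _
          rw [hi]
          exact sigma_path_ext rfl (by exact hq₀)
        · have hw : w ∈ A := hqA w (Walk.end_mem_support q)
          have hqpath : q.IsPath := isPath_of_concat hp
          obtain ⟨q₀, hq₀⟩ := exists_restrict q hqA hs hw
          have hq₀path : q₀.IsPath := by
            rw [← hq₀] at hqpath
            exact hqpath.of_map
          obtain ⟨i, hi⟩ := hf₀surj ⟨⟨w, hw⟩, ⟨q₀, hq₀path⟩⟩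
          refine ⟨btE k hk1 (Sum.inr i), ?_⟩
          show F ((btE k hk1).symm ((btE k hk1) (Sum.inr i))) = _
          rw [Equiv.symm_apply_apply]
          show extP hs hone (f₀ i) = _
          rw [hi]
          have hv' : mate hone (⟨w, hw⟩ : ↥A) = v := (mate_unique hone ⟨w, hw⟩ hv hq).symm
          apply sigma_path_ext hv'
          simp only [extP]
          refine (copy_concat _ _ hv').trans ?_
          show (q₀.map (vHom G A)).concat _ = _
          rw [hq₀]
          rfl

end AtomAux


open AtomAux in
/-- For any `k`-atom `G` with seed `s`, the binomial tree `T_k` is isomorphic to a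
subgraph of the path tree `T(G, s)`; moreover `T_k` is isomorphic to the whole path
tree `T(G, s)` if and only if `G` is isomorphic to `T_k`. -/
theorem binomialTree_subgraph_pathTree (k : ℕ) (hk : 1 ≤ k) {V : Type}
    (G : SimpleGraph V) (s : V) (h : IsKAtomSeed k G s) :
    (∃ f : Fin (2 ^ (k - 1)) → Σ v : V, G.Path s v,
        Function.Injective f ∧
        ∀ a b, (binomialTree k).Adj a b → (pathTree G s).Adj (f a) (f b)) ∧
    (Nonempty (binomialTree k ≃g pathTree G s) ↔ Nonempty (G ≃g binomialTree k)) := by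
  classical
  obtain ⟨f, hinj, hadj, hsc⟩ := atom_master h
  haveI hfin : Finite V := atom_finite h
  haveI : Fintype V := Fintype.ofFinite V
  letI : DecidableEq V := Classical.decEq V
  letI : DecidableRel G.Adj := Classical.decRel _
  haveI : Fintype (Σ v : V, G.Path s v) := by infer_instance
  refine ⟨⟨f, hinj, fun a b hab => (hadj a b).mp hab⟩, ?_, ?_⟩
  · rintro ⟨e⟩
    have hcards : Nat.card (Σ v : V, G.Path s v) = 2 ^ (k - 1) := by
      rw [← Nat.card_congr e.toEquiv]
      simp [Nat.card_eq_fintype_card]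
    have hb : Function.Bijective f :=
      (Nat.bijective_iff_injective_and_card f).mpr
        ⟨hinj, by rw [hcards]; simp [Nat.card_eq_fintype_card]⟩
    exact atom_tree_iso h (hsc.mp hb.2)
  · rintro ⟨e⟩
    have hcardV : Nat.card V = 2 ^ (k - 1) := by
      rw [Nat.card_congr e.toEquiv]
      simp [Nat.card_eq_fintype_card]
    have hsurjf := hsc.mpr hcardV
    exact ⟨⟨Equiv.ofBijective f ⟨hinj, hsurjf⟩, fun {a b} => (hadj a b).symm⟩⟩
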